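/- arXiv:1310.3520 — 2 statements merged into one kernel-verified Lean document; each statement's English description precedes it below -/
import Mathlib

section
/- Let A = [[A11, A12, 0],[A21, a22, A23],[0, A32, A33]] be a real matrix where A11 is m1×n1, A33 is m2×n2, a22 is a scalar, A12 is m1×1, A21 is 1×n1, A23 is 1×n2, A32 is m2×1. Suppose [A21 A23] x = 0 for all x in ker(A11 ⊕ A33), but there exists y in ker((A11 ⊕ A33)^T) with y^T [A12; A32] ≠ 0. Then rank(A) = rank([A11; A21]) + rank([A23; A33]) + 1, where [A11; A21] denotes A11 stacked above A21 and [A23; A33] denotes A23 stacked above A33. -/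
open Matrix

private lemma finrank_submodule_prod {M M' : Type*} [AddCommGroup M] [AddCommGroup M']
    [Module ℝ M] [Module ℝ M'] [FiniteDimensional ℝ M] [FiniteDimensional ℝ M']
    (p : Submodule ℝ M) (q : Submodule ℝ M') :
    Module.finrank ℝ (p.prod q) = Module.finrank ℝ p + Module.finrank ℝ q := by
  have e : (p.prod q) ≃ₗ[ℝ] p × q :=
    { toFun := fun x => (⟨x.1.1, x.2.1⟩, ⟨x.1.2, x.2.2⟩)
      invFun := fun y => ⟨(y.1.1, y.2.1), ⟨y.1.2, y.2.2⟩⟩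
      map_add' := fun _ _ => rfl
      map_smul' := fun _ _ => rfl
      left_inv := fun _ => rfl
      right_inv := fun _ => rfl }
  rw [e.finrank_eq, Module.finrank_prod]

private lemma rank_eq_of_ker_eq {n m m' : Type*} [Fintype n] [Fintype m] [Fintype m']
    (M : Matrix m n ℝ) (N : Matrix m' n ℝ)
    (h : LinearMap.ker M.mulVecLin = LinearMap.ker N.mulVecLin) : M.rank = N.rank := by
  have h1 := LinearMap.finrank_range_add_finrank_ker M.mulVecLin
  have h2 := LinearMap.finrank_range_add_finrank_ker N.mulVecLin
  rw [h] at h1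
  rw [Matrix.rank, Matrix.rank]
  omega

private lemma rank_submatrix_equiv {m n m' n' : Type*} [Fintype m] [Fintype n] [Fintype m']
    [Fintype n'] (A : Matrix m n ℝ) (e₁ : m' ≃ m) (e₂ : n' ≃ n) :
    (A.submatrix e₁ e₂).rank = A.rank := by
  rw [Matrix.rank, Matrix.rank, Matrix.mulVecLin_submatrix, LinearMap.range_comp,
    LinearMap.range_comp,
    show LinearMap.funLeft ℝ ℝ e₁ = (LinearEquiv.funCongrLeft ℝ ℝ e₁ : (m → ℝ) ≃ₗ[ℝ] (m' → ℝ)) from rfl,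
    show LinearMap.funLeft ℝ ℝ e₂.symm = (LinearEquiv.funCongrLeft ℝ ℝ e₂.symm : _ ≃ₗ[ℝ] _) from rfl,
    LinearEquiv.range, Submodule.map_top, LinearEquiv.finrank_map_eq]

private lemma range_prodMap' {M M₂ M₃ M₄ : Type*} [AddCommGroup M] [AddCommGroup M₂]
    [AddCommGroup M₃] [AddCommGroup M₄] [Module ℝ M] [Module ℝ M₂] [Module ℝ M₃] [Module ℝ M₄]
    (f : M →ₗ[ℝ] M₃) (g : M₂ →ₗ[ℝ] M₄) :
    LinearMap.range (f.prodMap g) = (LinearMap.range f).prod (LinearMap.range g) := by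
  ext ⟨a, b⟩
  simp only [LinearMap.mem_range, Submodule.mem_prod, LinearMap.prodMap_apply, Prod.mk.injEq]
  constructor
  · rintro ⟨⟨x, y⟩, hx, hy⟩
    exact ⟨⟨x, hx⟩, ⟨y, hy⟩⟩
  · rintro ⟨⟨x, hx⟩, ⟨y, hy⟩⟩
    exact ⟨(x, y), hx, hy⟩

private lemma rank_fromBlocks_diag {m1 n1 m2 n2 : Type*} [Fintype m1] [Fintype n1] [Fintype m2]
    [Fintype n2] (A : Matrix m1 n1 ℝ) (D : Matrix m2 n2 ℝ) :
    (fromBlocks A 0 0 D).rank = A.rank + D.rank := by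
  have key : (fromBlocks A 0 0 D).mulVecLin =
      ((LinearEquiv.sumArrowLequivProdArrow m1 m2 ℝ ℝ).symm :
          ((m1 → ℝ) × (m2 → ℝ)) →ₗ[ℝ] (m1 ⊕ m2 → ℝ)).comp
        ((LinearMap.prodMap A.mulVecLin D.mulVecLin).comp
          ((LinearEquiv.sumArrowLequivProdArrow n1 n2 ℝ ℝ) : (n1 ⊕ n2 → ℝ) →ₗ[ℝ] _)) := by
    apply LinearMap.ext
    intro x
    funext i
    cases i <;>
      simp [Matrix.fromBlocks_mulVec, LinearEquiv.sumArrowLequivProdArrow,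
        Equiv.sumArrowEquivProdArrow]
  rw [Matrix.rank, key, LinearMap.range_comp, LinearMap.range_comp, LinearEquiv.range,
    Submodule.map_top, LinearEquiv.finrank_map_eq, range_prodMap',
    finrank_submodule_prod, Matrix.rank, Matrix.rank]

private def sumShuffle (a b c : Type*) : (a ⊕ b) ⊕ c ≃ (a ⊕ c) ⊕ b where
  toFun x := match x with
    | .inl (.inl i) => .inl (.inl i)
    | .inl (.inr j) => .inr j
    | .inr k => .inl (.inr k)
  invFun x := match x with
    | .inl (.inl i) => .inl (.inl i)
    | .inl (.inr k) => .inr k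
    | .inr j => .inl (.inr j)
  left_inv x := by rcases x with (i | j) | k <;> rfl
  right_inv x := by rcases x with (i | k) | j <;> rfl

/-- Case (ii) of the decomposition lemma: if `[A21 A23] x = 0` for all
`x ∈ ker(A11 ⊕ A33)` but some `y ∈ ker((A11 ⊕ A33)ᵀ)` has `yᵀ [A12; A32] ≠ 0`,
then `rank A = rank [A11; A21] + rank [A23; A33] + 1`. -/
theorem rank_one_separation_row_case (m1 n1 m2 n2 : ℕ)
    (A11 : Matrix (Fin m1) (Fin n1) ℝ) (A12 : Matrix (Fin m1) (Fin 1) ℝ)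
    (A21 : Matrix (Fin 1) (Fin n1) ℝ) (a22 : ℝ)
    (A23 : Matrix (Fin 1) (Fin n2) ℝ) (A32 : Matrix (Fin m2) (Fin 1) ℝ)
    (A33 : Matrix (Fin m2) (Fin n2) ℝ)
    (h1 : ∀ x : Fin n1 ⊕ Fin n2 → ℝ,
      Matrix.mulVec (Matrix.fromBlocks A11 0 0 A33) x = 0 →
        Matrix.mulVec (Matrix.fromCols A21 A23) x = 0)
    (h2 : ∃ y : Fin m1 ⊕ Fin m2 → ℝ,
      Matrix.vecMul y (Matrix.fromBlocks A11 0 0 A33) = 0 ∧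
        Matrix.vecMul y (Matrix.fromRows A12 A32) ≠ 0) :
    (Matrix.fromBlocks
        (Matrix.fromBlocks A11 A12 A21 (Matrix.of fun (_ : Fin 1) (_ : Fin 1) => a22))
        (Matrix.fromRows (0 : Matrix (Fin m1) (Fin n2) ℝ) A23)
        (Matrix.fromCols (0 : Matrix (Fin m2) (Fin n1) ℝ) A32) A33).rank =
      (Matrix.fromRows A11 A21).rank + (Matrix.fromRows A23 A33).rank + 1 := by
  classical
  obtain ⟨y, hyB, hyc⟩ := h2
  set B : Matrix (Fin m1 ⊕ Fin m2) (Fin n1 ⊕ Fin n2) ℝ := Matrix.fromBlocks A11 0 0 A33 with hBdef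
  set c : Matrix (Fin m1 ⊕ Fin m2) (Fin 1) ℝ := Matrix.fromRows A12 A32 with hcdef
  set r : Matrix (Fin 1) (Fin n1 ⊕ Fin n2) ℝ := Matrix.fromCols A21 A23 with hrdef
  set a : Matrix (Fin 1) (Fin 1) ℝ := Matrix.of fun _ _ => a22 with hadef
  -- Step 1: the big matrix is a reindexing of `fromBlocks B c r a`.
  have hsub : (Matrix.fromBlocks
        (Matrix.fromBlocks A11 A12 A21 a)
        (Matrix.fromRows (0 : Matrix (Fin m1) (Fin n2) ℝ) A23)
        (Matrix.fromCols (0 : Matrix (Fin m2) (Fin n1) ℝ) A32) A33)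
      = (Matrix.fromBlocks B c r a).submatrix
          (sumShuffle (Fin m1) (Fin 1) (Fin m2)) (sumShuffle (Fin n1) (Fin 1) (Fin n2)) := by
    ext i j
    rcases i with (i | i) | i <;> rcases j with (j | j) | j <;> rfl
  -- Step 2: kernel of `fromBlocks B c r a` equals kernel of `fromBlocks B 0 0 1`.
  have hc0 : (Matrix.vecMul y c) 0 ≠ 0 := by
    intro h
    exact hyc (funext fun j => by rw [Subsingleton.elim j 0]; exact h)
  have hker : LinearMap.ker (Matrix.fromBlocks B c r a).mulVecLin
      = LinearMap.ker (Matrix.fromBlocks B 0 0 (1 : Matrix (Fin 1) (Fin 1) ℝ)).mulVecLin := by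
    ext x
    simp only [LinearMap.mem_ker, Matrix.mulVecLin_apply, Matrix.fromBlocks_mulVec]
    constructor
    · intro hx
      have hBc : B *ᵥ (x ∘ Sum.inl) + c *ᵥ (x ∘ Sum.inr) = 0 :=
        funext fun i => congrFun hx (Sum.inl i)
      have hy0 : y ⬝ᵥ (B *ᵥ (x ∘ Sum.inl) + c *ᵥ (x ∘ Sum.inr)) = 0 := by
        rw [hBc]; simp
      rw [dotProduct_add, Matrix.dotProduct_mulVec, Matrix.dotProduct_mulVec, hyB,
        zero_dotProduct, zero_add] at hy0
      have hxr0 : (x ∘ Sum.inr : Fin 1 → ℝ) = 0 := by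
        have : (Matrix.vecMul y c) 0 * x (Sum.inr 0) = 0 := by
          simpa [dotProduct, Fin.sum_univ_one] using hy0
        have hx0 : x (Sum.inr 0) = 0 := by
          rcases mul_eq_zero.mp this with h | h
          · exact absurd h hc0
          · exact h
        funext j
        rw [Subsingleton.elim j 0]
        exact hx0
      have hB0 : B *ᵥ (x ∘ Sum.inl) = 0 := by
        have : c *ᵥ (x ∘ Sum.inr) = 0 := by rw [hxr0, Matrix.mulVec_zero]
        rwa [this, add_zero] at hBc
      funext i
      rcases i with i | i
      · simp [hB0, hxr0]
      · simp [hxr0]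
    · intro hx
      have hB0 : B *ᵥ (x ∘ Sum.inl) = 0 := by
        have h' : B *ᵥ (x ∘ Sum.inl) + (0 : Matrix _ (Fin 1) ℝ) *ᵥ (x ∘ Sum.inr) = 0 :=
          funext fun i => congrFun hx (Sum.inl i)
        rwa [Matrix.zero_mulVec, add_zero] at h'
      have hxr0 : (x ∘ Sum.inr : Fin 1 → ℝ) = 0 := by
        have h' : (0 : Matrix (Fin 1) _ ℝ) *ᵥ (x ∘ Sum.inl)
            + (1 : Matrix (Fin 1) (Fin 1) ℝ) *ᵥ (x ∘ Sum.inr) = 0 :=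
          funext fun i => congrFun hx (Sum.inr i)
        rwa [Matrix.zero_mulVec, zero_add, Matrix.one_mulVec] at h'
      have hr0 : r *ᵥ (x ∘ Sum.inl) = 0 := h1 (x ∘ Sum.inl) hB0
      funext i
      rcases i with i | i
      · simp [hB0, hxr0]
      · simp [hr0, hxr0]
  -- Step 3: kernels for the stacked matrices.
  have k1 : LinearMap.ker (Matrix.fromRows A11 A21).mulVecLin = LinearMap.ker A11.mulVecLin := by
    ext x
    simp only [LinearMap.mem_ker, Matrix.mulVecLin_apply, Matrix.fromRows_mulVec]
    constructor
    · intro hx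
      exact funext fun i => congrFun hx (Sum.inl i)
    · intro hx
      have hBx : Matrix.fromBlocks A11 0 0 A33 *ᵥ (Sum.elim x 0 : Fin n1 ⊕ Fin n2 → ℝ) = 0 := by
        rw [Matrix.fromBlocks_mulVec]
        funext i
        rcases i with i | i <;> simp [hx]
      have h21 : A21 *ᵥ x = 0 := by
        have := h1 _ hBx
        rw [Matrix.fromCols_mulVec_sumElim] at this
        simpa using this
      funext i
      rcases i with i | i
      · simp [hx]
      · simp [h21]
  have k2 : LinearMap.ker (Matrix.fromRows A23 A33).mulVecLin = LinearMap.ker A33.mulVecLin := by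
    ext x
    simp only [LinearMap.mem_ker, Matrix.mulVecLin_apply, Matrix.fromRows_mulVec]
    constructor
    · intro hx
      exact funext fun i => congrFun hx (Sum.inr i)
    · intro hx
      have hBx : Matrix.fromBlocks A11 0 0 A33 *ᵥ (Sum.elim 0 x : Fin n1 ⊕ Fin n2 → ℝ) = 0 := by
        rw [Matrix.fromBlocks_mulVec]
        funext i
        rcases i with i | i <;> simp [hx]
      have h23 : A23 *ᵥ x = 0 := by
        have := h1 _ hBx
        rw [Matrix.fromCols_mulVec_sumElim] at this
        simpa using this
      funext i
      rcases i with i | i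
      · simp [h23]
      · simp [hx]
  -- Put everything together.
  rw [hsub, rank_submatrix_equiv, rank_eq_of_ker_eq _ _ hker, rank_fromBlocks_diag,
    rank_fromBlocks_diag, rank_eq_of_ker_eq _ _ k1, rank_eq_of_ker_eq _ _ k2,
    Matrix.rank_one, Fintype.card_fin]
end

section
/- Let C = [[C11, C12],[C21, c]] and D = [[d, C23],[C32, C33]] be real matrices, where c and d are scalars, C12 is a column and C21 is a row. For any real number e with sign(e) = sign(c + d) (i.e., e > 0 if c+d > 0, e < 0 if c+d < 0, e = 0 if c+d = 0), the matrix M = [[C11, C12, 0],[C21, c+d, C23],[0, C32, C33]] satisfies rank(M) ≤ rank(C) + rank(D). -/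
open Matrix

private lemma aux_rank_add_le {m n : Type*} [Fintype m] [Fintype n]
    (A B : Matrix m n ℝ) : (A + B).rank ≤ A.rank + B.rank := by
  rw [Matrix.rank, Matrix.rank, Matrix.rank, Matrix.mulVecLin_add]
  have hle : LinearMap.range (A.mulVecLin + B.mulVecLin) ≤
      LinearMap.range A.mulVecLin ⊔ LinearMap.range B.mulVecLin := by
    rintro _ ⟨x, rfl⟩
    exact Submodule.add_mem_sup ⟨x, rfl⟩ ⟨x, rfl⟩
  exact (Submodule.finrank_mono hle).trans
    (Submodule.finrank_add_le_finrank_add_finrank _ _)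

private lemma aux_rank_fromRows_zero_right {m₁ m₂ n : Type*} [Fintype n] [Fintype m₁]
    [DecidableEq m₁] (A : Matrix m₁ n ℝ) :
    (fromRows A (0 : Matrix m₂ n ℝ)).rank ≤ A.rank := by
  have h : fromRows A (0 : Matrix m₂ n ℝ) =
      fromRows (1 : Matrix m₁ m₁ ℝ) (0 : Matrix m₂ m₁ ℝ) * A := by
    rw [Matrix.fromRows_mul]; simp
  rw [h]
  exact Matrix.rank_mul_le_right _ _

private lemma aux_rank_fromRows_zero_left {m₁ m₂ n : Type*} [Fintype n] [Fintype m₂]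
    [DecidableEq m₂] (A : Matrix m₂ n ℝ) :
    (fromRows (0 : Matrix m₁ n ℝ) A).rank ≤ A.rank := by
  have h : fromRows (0 : Matrix m₁ n ℝ) A =
      fromRows (0 : Matrix m₁ m₂ ℝ) (1 : Matrix m₂ m₂ ℝ) * A := by
    rw [Matrix.fromRows_mul]; simp
  rw [h]
  exact Matrix.rank_mul_le_right _ _

private lemma aux_rank_fromCols_zero_right {m n₁ n₂ : Type*} [Fintype n₁] [Fintype n₂]
    [DecidableEq n₁] (A : Matrix m n₁ ℝ) :
    (fromCols A (0 : Matrix m n₂ ℝ)).rank ≤ A.rank := by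
  have h : fromCols A (0 : Matrix m n₂ ℝ) =
      A * fromCols (1 : Matrix n₁ n₁ ℝ) (0 : Matrix n₁ n₂ ℝ) := by
    rw [Matrix.mul_fromCols]; simp
  rw [h]
  exact Matrix.rank_mul_le_left _ _

private lemma aux_rank_fromCols_zero_left {m n₁ n₂ : Type*} [Fintype n₁] [Fintype n₂]
    [DecidableEq n₂] (A : Matrix m n₂ ℝ) :
    (fromCols (0 : Matrix m n₁ ℝ) A).rank ≤ A.rank := by
  have h : fromCols (0 : Matrix m n₁ ℝ) A =
      A * fromCols (0 : Matrix n₂ n₁ ℝ) (1 : Matrix n₂ n₂ ℝ) := by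
    rw [Matrix.mul_fromCols]; simp
  rw [h]
  exact Matrix.rank_mul_le_left _ _

private lemma aux_rank_submatrix_equiv {m n k l : Type*} [Fintype n] [Fintype l]
    (A : Matrix k l ℝ) (e₁ : m ≃ k) (e₂ : n ≃ l) :
    (A.submatrix e₁ e₂).rank = A.rank := by
  rw [Matrix.rank, Matrix.rank, Matrix.mulVecLin_submatrix, LinearMap.range_comp,
    LinearMap.range_comp,
    show LinearMap.funLeft ℝ ℝ e₂.symm = LinearEquiv.funCongrLeft ℝ ℝ e₂.symm from rfl,
    show LinearMap.funLeft ℝ ℝ (⇑e₁) = LinearEquiv.funCongrLeft ℝ ℝ e₁ from rfl,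
    LinearEquiv.range, Submodule.map_top, LinearEquiv.finrank_map_eq]

/-- The 1-subdirect sum: for matrices `C = [[C11,C12],[C21,c]]` and
`D = [[d,C23],[C32,C33]]` with overlapping `1×1` blocks, and any real `e` with the same
sign as `c + d`, the matrix `M` with middle entry `c + d` satisfies
`rank M ≤ rank C + rank D`. -/
theorem rank_one_subdirect_sum_le (m1 n1 m2 n2 : ℕ)
    (C11 : Matrix (Fin m1) (Fin n1) ℝ) (C12 : Matrix (Fin m1) (Fin 1) ℝ)
    (C21 : Matrix (Fin 1) (Fin n1) ℝ) (c d : ℝ)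
    (C23 : Matrix (Fin 1) (Fin n2) ℝ) (C32 : Matrix (Fin m2) (Fin 1) ℝ)
    (C33 : Matrix (Fin m2) (Fin n2) ℝ) (e : ℝ)
    (he_pos : 0 < c + d → 0 < e) (he_neg : c + d < 0 → e < 0)
    (he_zero : c + d = 0 → e = 0) :
    (Matrix.fromBlocks
        (Matrix.fromBlocks C11 C12 C21 (Matrix.of fun (_ : Fin 1) (_ : Fin 1) => c + d))
        (Matrix.fromRows (0 : Matrix (Fin m1) (Fin n2) ℝ) C23)
        (Matrix.fromCols (0 : Matrix (Fin m2) (Fin n1) ℝ) C32) C33).rank ≤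
      (Matrix.fromBlocks C11 C12 C21 (Matrix.of fun (_ : Fin 1) (_ : Fin 1) => c)).rank +
        (Matrix.fromBlocks (Matrix.of fun (_ : Fin 1) (_ : Fin 1) => d) C23 C32 C33).rank := by
  set C := Matrix.fromBlocks C11 C12 C21 (Matrix.of fun (_ : Fin 1) (_ : Fin 1) => c)
  set D := Matrix.fromBlocks (Matrix.of fun (_ : Fin 1) (_ : Fin 1) => d) C23 C32 C33
  set A := Matrix.fromBlocks C (0 : Matrix (Fin m1 ⊕ Fin 1) (Fin n2) ℝ)
      (0 : Matrix (Fin m2) (Fin n1 ⊕ Fin 1) ℝ) (0 : Matrix (Fin m2) (Fin n2) ℝ) with hA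
  set B := Matrix.fromBlocks
      (Matrix.fromBlocks (0 : Matrix (Fin m1) (Fin n1) ℝ) (0 : Matrix (Fin m1) (Fin 1) ℝ)
        (0 : Matrix (Fin 1) (Fin n1) ℝ) (Matrix.of fun (_ : Fin 1) (_ : Fin 1) => d))
      (Matrix.fromRows (0 : Matrix (Fin m1) (Fin n2) ℝ) C23)
      (Matrix.fromCols (0 : Matrix (Fin m2) (Fin n1) ℝ) C32) C33 with hB
  have hsum : (Matrix.fromBlocks
        (Matrix.fromBlocks C11 C12 C21 (Matrix.of fun (_ : Fin 1) (_ : Fin 1) => c + d))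
        (Matrix.fromRows (0 : Matrix (Fin m1) (Fin n2) ℝ) C23)
        (Matrix.fromCols (0 : Matrix (Fin m2) (Fin n1) ℝ) C32) C33) = A + B := by
    ext ((i | i) | i) ((j | j) | j) <;>
      simp [hA, hB, C]
  rw [hsum]
  refine (aux_rank_add_le A B).trans (add_le_add ?_ ?_)
  · -- rank A ≤ rank C
    have h : A = fromRows (fromCols C (0 : Matrix (Fin m1 ⊕ Fin 1) (Fin n2) ℝ))
        (0 : Matrix (Fin m2) ((Fin n1 ⊕ Fin 1) ⊕ Fin n2) ℝ) := by
      ext ((i | i) | i) ((j | j) | j) <;> simp [hA]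
    rw [h]
    exact (aux_rank_fromRows_zero_right _).trans (aux_rank_fromCols_zero_right _)
  · -- rank B ≤ rank D
    have h : B = (Matrix.fromBlocks (0 : Matrix (Fin m1) (Fin n1) ℝ)
          (0 : Matrix (Fin m1) (Fin 1 ⊕ Fin n2) ℝ)
          (0 : Matrix (Fin 1 ⊕ Fin m2) (Fin n1) ℝ) D).submatrix
        (Equiv.sumAssoc (Fin m1) (Fin 1) (Fin m2))
        (Equiv.sumAssoc (Fin n1) (Fin 1) (Fin n2)) := by
      ext ((i | i) | i) ((j | j) | j) <;> simp [hB, D, Equiv.sumAssoc]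
    rw [h, aux_rank_submatrix_equiv]
    have h2 : (Matrix.fromBlocks (0 : Matrix (Fin m1) (Fin n1) ℝ)
          (0 : Matrix (Fin m1) (Fin 1 ⊕ Fin n2) ℝ)
          (0 : Matrix (Fin 1 ⊕ Fin m2) (Fin n1) ℝ) D) =
        fromRows (0 : Matrix (Fin m1) (Fin n1 ⊕ (Fin 1 ⊕ Fin n2)) ℝ)
          (fromCols (0 : Matrix (Fin 1 ⊕ Fin m2) (Fin n1) ℝ) D) := by
      ext (i | (i | i)) (j | (j | j)) <;> simp
    rw [h2]
    exact (aux_rank_fromRows_zero_left _).trans (aux_rank_fromCols_zero_left _)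
end
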